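/- For a weak contact metric structure (φ,Q,ξ,η,g) on M, the tensors N⁽²⁾ and N⁽⁴⁾ vanish identically: (φX)(η(Y)) - η([φX,Y]) - (φY)(η(X)) + η([φY,X]) = 0 and ξ(η(X)) - η([ξ,X]) = 0 for all smooth vector fields X,Y; in particular dη(ξ,X) = 0 for all X. -/

import Mathlib

open scoped Manifold

noncomputable section

/-- Smooth vector fields on a manifold `M`, modelled as derivations of the algebra of smooth
real-valued functions on `M`. -/
abbrev VectorField {E : Type*} [NormedAddCommGroup E] [NormedSpace ℝ E]
    {H : Type*} [TopologicalSpace H] (I : ModelWithCorners ℝ E H)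
    (M : Type*) [TopologicalSpace M] [ChartedSpace H M] :=
  Derivation ℝ C^(⊤ : ℕ∞)⟮I, M; ℝ⟯ C^(⊤ : ℕ∞)⟮I, M; ℝ⟯

variable {E : Type*} [NormedAddCommGroup E] [NormedSpace ℝ E]
  {H : Type*} [TopologicalSpace H] {I : ModelWithCorners ℝ E H}
  {M : Type*} [TopologicalSpace M] [ChartedSpace H M]

/-- `dη(X,Y) = ½ (X(η(Y)) - Y(η(X)) - η([X,Y]))`. -/
def dEta (η : VectorField I M →ₗ[C^(⊤ : ℕ∞)⟮I, M; ℝ⟯] C^(⊤ : ℕ∞)⟮I, M; ℝ⟯)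
    (X Y : VectorField I M) : C^(⊤ : ℕ∞)⟮I, M; ℝ⟯ :=
  (2 : ℝ)⁻¹ • (X (η Y) - Y (η X) - η ⁅X, Y⁆)

/-- The Nijenhuis torsion `[φ,φ](X,Y) = φ²[X,Y] + [φX,φY] - φ[φX,Y] - φ[X,φY]`. -/
def nijenhuis (φ : VectorField I M → VectorField I M) (X Y : VectorField I M) :
    VectorField I M :=
  φ (φ ⁅X, Y⁆) + ⁅φ X, φ Y⁆ - φ ⁅φ X, Y⁆ - φ ⁅X, φ Y⁆

/-- `N⁽¹⁾(X,Y) = [φ,φ](X,Y) + 2 dη(X,Y) Qξ`. -/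
def N1 (φ Q : VectorField I M →ₗ[C^(⊤ : ℕ∞)⟮I, M; ℝ⟯] VectorField I M)
    (ξ : VectorField I M) (η : VectorField I M →ₗ[C^(⊤ : ℕ∞)⟮I, M; ℝ⟯] C^(⊤ : ℕ∞)⟮I, M; ℝ⟯)
    (X Y : VectorField I M) : VectorField I M :=
  nijenhuis ⇑φ X Y + ((2 : ℝ) • dEta η X Y) • Q ξ

/-- `N⁽²⁾(X,Y) = (φX)(η(Y)) - η([φX,Y]) - (φY)(η(X)) + η([φY,X])`. -/
def N2 (φ : VectorField I M →ₗ[C^(⊤ : ℕ∞)⟮I, M; ℝ⟯] VectorField I M)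
    (η : VectorField I M →ₗ[C^(⊤ : ℕ∞)⟮I, M; ℝ⟯] C^(⊤ : ℕ∞)⟮I, M; ℝ⟯)
    (X Y : VectorField I M) : C^(⊤ : ℕ∞)⟮I, M; ℝ⟯ :=
  (φ X) (η Y) - η ⁅φ X, Y⁆ - (φ Y) (η X) + η ⁅φ Y, X⁆

set_option maxHeartbeats 2000000 in
theorem weak_contact_N2_N4_vanish
    [FiniteDimensional ℝ E] [I.Boundaryless] [IsManifold I (⊤ : ℕ∞) M]
    (n : ℕ) (hn : 1 ≤ n) (hdim : Module.finrank ℝ E = 2 * n + 1)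
    (φ Q : VectorField I M →ₗ[C^(⊤ : ℕ∞)⟮I, M; ℝ⟯] VectorField I M)
    (hQ : Function.Bijective Q)
    (ξ : VectorField I M)
    (η : VectorField I M →ₗ[C^(⊤ : ℕ∞)⟮I, M; ℝ⟯] C^(⊤ : ℕ∞)⟮I, M; ℝ⟯)
    (g : VectorField I M →ₗ[C^(⊤ : ℕ∞)⟮I, M; ℝ⟯] VectorField I M →ₗ[C^(⊤ : ℕ∞)⟮I, M; ℝ⟯] C^(⊤ : ℕ∞)⟮I, M; ℝ⟯)
    (ν : ℝ) (hν : 0 < ν)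
    (hφφ : ∀ X, φ (φ X) = -(Q X) + η X • Q ξ)
    (hηξ : η ξ = 1)
    (hQξ : Q ξ = ν • ξ)
    (hD : ∀ X, η X = 0 → η (φ X) = 0)
    (hg_symm : ∀ X Y, g X Y = g Y X)
    (hg_pos : ∀ X (x : M), 0 ≤ g X X x)
    (hg_def : ∀ X, g X X = 0 → X = 0)
    (hcompat : ∀ X Y, g (φ X) (φ Y) = g X (Q Y) - η X * η (Q Y))
    (hcontact : ∀ X Y, g X (φ Y) = dEta η X Y)
    :
    (∀ X Y, N2 φ η X Y = 0) ∧ (∀ X, ξ (η X) - η ⁅ξ, X⁆ = 0) ∧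
      (∀ X, dEta η ξ X = 0) := by
  -- `φ² ξ = 0`
  have hφφξ : φ (φ ξ) = 0 := by
    rw [hφφ, hηξ, one_smul]; abel
  have h := hφφ (φ ξ)
  rw [hφφξ, map_zero] at h
  have hQφξ : Q (φ ξ) = η (φ ξ) • Q ξ := by
    rwa [eq_comm, neg_add_eq_zero] at h
  have hφξ : φ ξ = η (φ ξ) • ξ := hQ.injective (by rw [map_smul, ← hQφξ])
  set f := η (φ ξ) with hf
  have h0 : f * f = 0 := by
    have h1 : (0 : VectorField I M) = (f * f) • ξ := by
      calc (0 : VectorField I M) = φ (φ ξ) := hφφξ.symm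
        _ = φ (f • ξ) := by rw [hφξ]
        _ = f • φ ξ := by rw [map_smul]
        _ = f • (f • ξ) := by rw [hφξ]
        _ = (f * f) • ξ := by rw [smul_smul]
    have h2 := congrArg η h1
    rw [map_zero, map_smul, hηξ, smul_eq_mul, mul_one] at h2
    exact h2.symm
  have hf0 : f = 0 := by
    ext x
    have hx := DFunLike.congr_fun h0 x
    simp only [ContMDiffMap.coe_mul, Pi.mul_apply, ContMDiffMap.coe_zero,
      Pi.zero_apply] at hx ⊢
    exact mul_self_eq_zero.mp hx
  -- `φ ξ = 0`
  have hφξ0 : φ ξ = 0 := by rw [hφξ, hf0, zero_smul]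
  -- `η ∘ φ = 0`
  have hηφ : ∀ X, η (φ X) = 0 := by
    intro X
    have h1 : η (X - η X • ξ) = 0 := by
      rw [map_sub, map_smul, hηξ, smul_eq_mul, mul_one, sub_self]
    have h2 := hD (X - η X • ξ) h1
    rwa [map_sub, map_smul, hφξ0, smul_zero, sub_zero] at h2
  -- `dη` is antisymmetric
  have hskew : ∀ X Y, dEta η X Y = -dEta η Y X := by
    intro X Y
    rw [dEta, dEta, ← lie_skew X Y, map_neg, ← smul_neg]
    congr 1
    abel
  -- `2 dη(φX, Y) = (φX)(η Y) - η[φX, Y]`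
  have hD2 : ∀ X Y, (2 : ℝ) • dEta η (φ X) Y = (φ X) (η Y) - η ⁅φ X, Y⁆ := by
    intro X Y
    rw [dEta, smul_smul, show (2 : ℝ) * 2⁻¹ = 1 by norm_num, one_smul,
      hηφ X, map_zero, sub_zero]
  -- the third claim
  have h4 : ∀ X, dEta η ξ X = 0 := by
    intro X
    rw [hskew, ← hcontact, hφξ0, map_zero, neg_zero]
  refine ⟨?_, ?_, h4⟩
  · intro X Y
    have e : N2 φ η X Y = (2 : ℝ) • dEta η (φ X) Y - (2 : ℝ) • dEta η (φ Y) X := by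
      rw [hD2, hD2, N2]; abel
    rw [e, ← hcontact, ← hcontact, hg_symm (φ Y) (φ X), sub_self]
  · intro X
    have h5 : (2 : ℝ) • dEta η ξ X = ξ (η X) - η ⁅ξ, X⁆ := by
      rw [dEta, smul_smul, show (2 : ℝ) * 2⁻¹ = 1 by norm_num, one_smul,
        hηξ, Derivation.map_one_eq_zero, sub_zero]
    rw [← h5, h4, smul_zero]
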